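/- The function I : (0, ∞) → ℝ defined by I(A) = ∫_{-∞}^{∞} q(s; A) ds is continuous on (0, ∞). -/

import Mathlib

open MeasureTheory Filter Real

private lemma aux_stay {φ g : ℝ → ℝ} {c b : ℝ} (hc : 0 < c) (hφcont : Continuous φ)
    (hd : ∀ t, b ≤ t → HasDerivAt φ (g t) t)
    (hneg : ∀ t, b ≤ t → 0 ≤ φ t → g t ≤ -c)
    (h0 : φ b ≤ 0) : ∀ s, b ≤ s → φ s ≤ 0 := by
  intro s hs
  by_contra hpos
  push_neg at hpos
  set T : Set ℝ := Set.Icc b s ∩ {t | φ t ≤ 0} with hT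
  have hTne : b ∈ T := ⟨⟨le_rfl, hs⟩, h0⟩
  have hTbdd : BddAbove T := BddAbove.mono (fun x hx => hx.1) bddAbove_Icc
  have hTclosed : IsClosed T := isClosed_Icc.inter (isClosed_le hφcont continuous_const)
  set u := sSup T with hu
  have huT : u ∈ T := hTclosed.csSup_mem ⟨b, hTne⟩ hTbdd
  have hbu : b ≤ u := huT.1.1
  have hus : u ≤ s := huT.1.2
  have hφu : φ u ≤ 0 := huT.2
  have hune : u ≠ s := fun h => by rw [h] at hφu; linarith
  have hult : u < s := lt_of_le_of_ne hus hune
  have hmid : ∀ t, u < t → t ≤ s → 0 < φ t := by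
    intro t h1 h2
    by_contra h3
    push_neg at h3
    exact absurd (le_csSup hTbdd ⟨⟨hbu.trans h1.le, h2⟩, h3⟩) (not_le.mpr h1)
  have hantiφ : AntitoneOn φ (Set.Icc u s) := by
    apply antitoneOn_of_deriv_nonpos (convex_Icc u s) hφcont.continuousOn
    · intro t ht
      rw [interior_Icc] at ht
      exact ((hd t (hbu.trans ht.1.le)).differentiableAt).differentiableWithinAt
    · intro t ht
      rw [interior_Icc] at ht
      have hbt : b ≤ t := hbu.trans ht.1.le
      rw [(hd t hbt).deriv]
      have := hneg t hbt (hmid t ht.1 ht.2.le).le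
      linarith
  have := hantiφ ⟨le_rfl, hus⟩ ⟨hus, le_rfl⟩ hus
  linarith

set_option maxHeartbeats 1600000 in
theorem stmt_18 (a μ : ℝ) (ha : 0 < a) (hμ : 1 / 3 < μ)
    (q : ℝ → ℝ → ℝ)
    (hq : ∀ A : ℝ, 0 < A → ContDiff ℝ 2 (fun s => q s A))
    (hode : ∀ A : ℝ, 0 < A → ∀ s : ℝ,
      deriv (deriv (fun s => q s A)) s * q s A
        + a * s * deriv (fun s => q s A) s * q s A
        + μ * q s A + (1 / 3) * s * deriv (fun s => q s A) s = 0)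
    (hq0 : ∀ A : ℝ, 0 < A → q 0 A = A)
    (hq0' : ∀ A : ℝ, 0 < A → deriv (fun s => q s A) 0 = 0)
    (hpos : ∀ A : ℝ, 0 < A → ∀ s : ℝ, 0 < q s A)
    (heven : ∀ A : ℝ, 0 < A → ∀ s : ℝ, q (-s) A = q s A)
    (hanti : ∀ A : ℝ, 0 < A → StrictAntiOn (fun s => q s A) (Set.Ioi 0))
    (hbd : ∀ A : ℝ, 0 < A → ∀ s : ℝ,
      |deriv (fun s => q s A) s| ≤ μ * Real.sqrt (3 * A / (1 + 3 * a * A)))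
    (hlim : ∀ A : ℝ, 0 < A → Tendsto (fun s => q s A) atTop (nhds 0))
    (hint : ∀ A : ℝ, 0 < A → Integrable (fun s => q s A))
    (hcont : ∀ s : ℝ, ContinuousOn (fun A => q s A) (Set.Ioi 0)) :
    ContinuousOn (fun A : ℝ => ∫ s : ℝ, q s A) (Set.Ioi 0) := by
  -- monotonicity helper
  have hmono : ∀ A : ℝ, 0 < A → ∀ x y : ℝ, 0 < x → x ≤ y → q y A ≤ q x A := by
    intro A hA x y hx hxy
    rcases hxy.eq_or_lt with rfl | h
    · exact le_rfl
    · exact ((hanti A hA) (Set.mem_Ioi.mpr hx) (Set.mem_Ioi.mpr (hx.trans h)) h).le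
  -- values are at most A on [0, ∞)
  have hle0 : ∀ A : ℝ, 0 < A → ∀ s : ℝ, 0 ≤ s → q s A ≤ A := by
    intro A hA s hs
    rcases hs.eq_or_lt with rfl | hs
    · rw [hq0 A hA]
    · have hc0 : Tendsto (fun t => q t A) (nhdsWithin 0 (Set.Ioi 0)) (nhds A) := by
        have := ((hq A hA).continuous.continuousAt (x := 0)).tendsto
        rw [hq0 A hA] at this
        exact this.mono_left nhdsWithin_le_nhds
      refine ge_of_tendsto hc0 ?_
      filter_upwards [Ioc_mem_nhdsGT_of_mem (Set.left_mem_Ico.mpr hs)] with t ht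
      exact hmono A hA t s ht.1 ht.2
  -- evenness helper
  have habs : ∀ A : ℝ, 0 < A → ∀ s : ℝ, q s A = q |s| A := by
    intro A hA s
    rcases le_or_gt 0 s with h | h
    · rw [abs_of_nonneg h]
    · rw [abs_of_neg h, ← heven A hA s]
  -- constants
  obtain ⟨k, δ, ε, hk1, hδ0, hε0, hak, hμk⟩ :
      ∃ k δ ε : ℝ, 1 < k ∧ 0 < δ ∧ 0 < ε ∧ a * k * ε = δ ∧ μ = k / 3 + 2 * δ := by
    refine ⟨(3 * μ + 1) / 2, (3 * μ - 1) / 12, ((3 * μ - 1) / 12) / (a * ((3 * μ + 1) / 2)),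
      by linarith, by linarith, ?_, ?_, by ring⟩
    · exact div_pos (by linarith) (mul_pos ha (by linarith))
    · field_simp
  have hk0 : 0 < k := lt_trans one_pos hk1
  intro A₀ hA₀
  rw [Set.mem_Ioi] at hA₀
  have hKpos : ∀ A ∈ Set.Icc (A₀ / 2) (A₀ + 1), 0 < A := fun A hA =>
    lt_of_lt_of_le (by linarith) hA.1
  -- uniform smallness of the tail
  have hS : ∃ S : ℝ, 1 ≤ S ∧ ∀ A ∈ Set.Icc (A₀ / 2) (A₀ + 1), ∀ s : ℝ, S ≤ s → q s A ≤ ε := by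
    have hUopen : ∀ n : ℕ, IsOpen {A : ℝ | 0 < A ∧ q ((n : ℝ) + 1) A < ε} := by
      intro n
      rw [isOpen_iff_mem_nhds]
      rintro A ⟨hA, hqA⟩
      have hcA : ContinuousAt (fun B => q ((n : ℝ) + 1) B) A :=
        (hcont _).continuousAt (isOpen_Ioi.mem_nhds hA)
      filter_upwards [isOpen_Ioi.mem_nhds hA, hcA (Iio_mem_nhds hqA)] with B h1 h2
      exact ⟨h1, h2⟩
    have hcover : Set.Icc (A₀ / 2) (A₀ + 1) ⊆ ⋃ n : ℕ, {A : ℝ | 0 < A ∧ q ((n : ℝ) + 1) A < ε} := by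
      intro A hA
      have hA' : 0 < A := hKpos A hA
      have := (hlim A hA').eventually_lt_const hε0
      rw [eventually_atTop] at this
      obtain ⟨N, hN⟩ := this
      obtain ⟨n, hn⟩ := exists_nat_ge N
      exact Set.mem_iUnion.mpr ⟨n, hA', hN _ (by linarith)⟩
    obtain ⟨t, ht⟩ := isCompact_Icc.elim_finite_subcover _ hUopen hcover
    refine ⟨(t.sup id : ℕ) + 1, by simp, ?_⟩
    intro A hA s hs
    obtain ⟨n, hn, hAn⟩ := Set.mem_iUnion₂.mp (ht hA)
    have hA' : 0 < A := hAn.1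
    have hns : ((n : ℝ) + 1) ≤ s := by
      have h1 : (n : ℝ) ≤ ((t.sup id : ℕ) : ℝ) := by exact_mod_cast Finset.le_sup (f := id) hn
      linarith
    have hmq := hmono A hA' ((n : ℝ) + 1) s (by positivity) hns
    have h2 : q ((n : ℝ) + 1) A < ε := hAn.2
    linarith
  obtain ⟨S, hS1, hSsmall⟩ := hS
  have hSpos : 0 < S := by linarith
  obtain ⟨s₁, hs₁S, hs₁eq⟩ : ∃ s₁ : ℝ, S ≤ s₁ ∧ δ * S * (s₁ - S) = k * ε := by
    refine ⟨S + k * ε / (δ * S), ?_, ?_⟩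
    · have h1 : 0 < k * ε / (δ * S) := by positivity
      linarith
    · have h2 : δ * S ≠ 0 := by positivity
      field_simp
      ring
  have hs₁pos : 0 < s₁ := lt_of_lt_of_le hSpos hs₁S
  -- the tail bound
  have htail : ∀ A ∈ Set.Icc (A₀ / 2) (A₀ + 1), ∀ s : ℝ, s₁ ≤ s →
      q s A ≤ ε * s₁ ^ k * s ^ (-k) := by
    intro A hAK s hs
    have hA : 0 < A := hKpos A hAK
    have hodeA := hode A hA
    set f : ℝ → ℝ := fun s => q s A with hf_def
    have hf : ContDiff ℝ 2 f := hq A hA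
    have hf' := contDiff_succ_iff_deriv.mp (show ContDiff ℝ (1 + 1) f from hf)
    have hfd : Differentiable ℝ f := hf'.1
    have hf1 : ContDiff ℝ 1 (deriv f) := hf'.2.2
    have hf1d : Differentiable ℝ (deriv f) := hf1.differentiable one_ne_zero
    have hfpos : ∀ t, 0 < f t := hpos A hA
    have hfsmall : ∀ t, S ≤ t → f t ≤ ε := fun t ht => hSsmall A hAK t ht
    -- the derivative is nonpositive on (0, ∞)
    have hf1le : ∀ t : ℝ, 0 < t → deriv f t ≤ 0 := by
      intro t ht
      have hd : HasDerivAt f (deriv f t) t := (hfd t).hasDerivAt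
      have hslope := hasDerivAt_iff_tendsto_slope.mp hd
      have h2 : Tendsto (slope f t) (nhdsWithin t (Set.Ioi t)) (nhds (deriv f t)) :=
        hslope.mono_left (nhdsWithin_mono t (fun y hy => Set.mem_compl_singleton_iff.mpr
          (ne_of_gt hy)))
      refine le_of_tendsto h2 ?_
      filter_upwards [self_mem_nhdsWithin] with y hy
      have hyt : t < y := hy
      have hle : f y ≤ f t := hmono A hA t y ht hyt.le
      rw [slope_def_field]
      apply div_nonpos_of_nonpos_of_nonneg <;> linarith
    -- the barrier function
    set φ : ℝ → ℝ := fun t => t * deriv f t + k * f t with hφ_def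
    have hφ_eval : ∀ t, φ t = t * deriv f t + k * f t := fun t => rfl
    have hφd : ∀ t, HasDerivAt φ ((k + 1) * deriv f t + t * deriv (deriv f) t) t := by
      intro t
      have h1 : HasDerivAt (fun t => t * deriv f t)
          (1 * deriv f t + t * deriv (deriv f) t) t :=
        (hasDerivAt_id t).mul (hf1d t).hasDerivAt
      have h2 : HasDerivAt (fun t => k * f t) (k * deriv f t) t := (hfd t).hasDerivAt.const_mul k
      have : HasDerivAt φ (1 * deriv f t + t * deriv (deriv f) t + k * deriv f t) t := h1.add h2
      convert this using 1
      ring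
    have hφcont : Continuous φ :=
      (continuous_id.mul hf1.continuous).add (continuous_const.mul hfd.continuous)
    -- key differential inequality
    have hkey : ∀ t, S ≤ t → 0 ≤ φ t →
        (k + 1) * deriv f t + t * deriv (deriv f) t ≤ -(δ * S) := by
      intro t ht hφt
      have ht0 : 0 < t := lt_of_lt_of_le hSpos ht
      have hft : 0 < f t := hfpos t
      have hfε : f t ≤ ε := hfsmall t ht
      have hf1t : deriv f t ≤ 0 := hf1le t ht0
      rw [hφ_eval] at hφt
      have hφt' : -(t * deriv f t) ≤ k * f t := by linarith
      have hodet := hodeA t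
      have h3 : t * deriv (deriv f) t * f t
          = -(a * t ^ 2 * deriv f t * f t) - μ * t * f t - 1 / 3 * t ^ 2 * deriv f t := by
        linear_combination t * hodet
      have key2 : ((k + 1) * deriv f t + t * deriv (deriv f) t) * f t ≤ (-(δ * t)) * f t := by
        have e1 : 0 ≤ a * t * f t := by positivity
        have c1 : (k + 1) * deriv f t * f t ≤ 0 :=
          mul_nonpos_of_nonpos_of_nonneg (mul_nonpos_of_nonneg_of_nonpos (by linarith) hf1t)
            hft.le
        have c2a : a * t * f t * (-(t * deriv f t)) ≤ a * t * f t * (k * f t) :=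
          mul_le_mul_of_nonneg_left hφt' e1
        have c2b : a * k * t * f t * f t ≤ a * k * t * f t * ε :=
          mul_le_mul_of_nonneg_left hfε (by positivity)
        have c3 : t / 3 * (-(t * deriv f t)) ≤ t / 3 * (k * f t) :=
          mul_le_mul_of_nonneg_left hφt' (by positivity)
        have c4 : a * k * t * f t * ε = δ * t * f t := by
          have h5 : a * k * t * f t * ε = (a * k * ε) * t * f t := by ring
          rw [h5, hak]
        nlinarith [c1, c2a, c2b, c3, c4, h3]
      have h6 := (mul_le_mul_iff_of_pos_right hft).mp key2
      have hδt : δ * S ≤ δ * t := mul_le_mul_of_nonneg_left ht hδ0.le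
      linarith
    -- there is a crossing point in [S, s₁]
    have hcross : ∃ s₂ ∈ Set.Icc S s₁, φ s₂ ≤ 0 := by
      by_contra hcon
      push_neg at hcon
      set ψ : ℝ → ℝ := fun t => φ t + δ * S * t with hψ_def
      have hψ_eval : ∀ t, ψ t = φ t + δ * S * t := fun t => rfl
      have hψd : ∀ t, HasDerivAt ψ
          (((k + 1) * deriv f t + t * deriv (deriv f) t) + δ * S) t := by
        intro t
        have h2 : HasDerivAt (fun t => δ * S * t) (δ * S) t := by
          simpa using (hasDerivAt_id t).const_mul (δ * S)
        exact (hφd t).add h2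
      have hψcont : Continuous ψ := hφcont.add (continuous_const.mul continuous_id)
      have hψanti : AntitoneOn ψ (Set.Icc S s₁) := by
        apply antitoneOn_of_deriv_nonpos (convex_Icc S s₁) hψcont.continuousOn
        · intro x hx
          exact (hψd x).differentiableAt.differentiableWithinAt
        · intro x hx
          rw [interior_Icc] at hx
          rw [(hψd x).deriv]
          have := hkey x hx.1.le (hcon x ⟨hx.1.le, hx.2.le⟩).le
          linarith
      have h1 := hψanti ⟨le_rfl, hs₁S⟩ ⟨hs₁S, le_rfl⟩ hs₁S
      rw [hψ_eval, hψ_eval] at h1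
      have hφS : φ S ≤ k * ε := by
        rw [hφ_eval]
        have h1 := hf1le S hSpos
        have h2 := hfsmall S le_rfl
        nlinarith [hSpos, hk0]
      have h7 := hcon s₁ ⟨hs₁S, le_rfl⟩
      nlinarith [h1, hs₁eq, hφS, h7]
    obtain ⟨s₂, hs₂mem, hs₂⟩ := hcross
    have hs₂pos : 0 < s₂ := lt_of_lt_of_le hSpos hs₂mem.1
    -- φ stays nonpositive
    have hstay : ∀ t, s₂ ≤ t → φ t ≤ 0 := by
      refine aux_stay (c := δ * S) (by positivity) hφcont (fun t _ => hφd t) ?_ hs₂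
      intro t ht hφt
      exact hkey t (hs₂mem.1.trans ht) hφt
    -- s^k * f s is antitone on [s₂, ∞)
    have hmonot : AntitoneOn (fun t => t ^ k * f t) (Set.Ici s₂) := by
      have hds : ∀ t ∈ Set.Ioi s₂, HasDerivAt (fun t => t ^ k * f t)
          (k * t ^ (k - 1) * f t + t ^ k * deriv f t) t := by
        intro t ht
        have ht0 : 0 < t := hs₂pos.trans ht
        exact (Real.hasDerivAt_rpow_const (Or.inl ht0.ne')).mul (hfd t).hasDerivAt
      apply antitoneOn_of_deriv_nonpos (convex_Ici s₂)
      · apply ContinuousOn.mul _ hfd.continuous.continuousOn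
        apply ContinuousOn.rpow_const continuousOn_id
        intro x hx
        exact Or.inl (ne_of_gt (lt_of_lt_of_le hs₂pos hx))
      · intro x hx
        rw [interior_Ici] at hx
        exact (hds x hx).differentiableAt.differentiableWithinAt
      · intro x hx
        rw [interior_Ici] at hx
        rw [(hds x hx).deriv]
        have hx0 : 0 < x := hs₂pos.trans hx
        have hxk : x ^ k = x ^ (k - 1) * x := by rw [← Real.rpow_add_one hx0.ne']; ring_nf
        have hφx : φ x ≤ 0 := hstay x hx.le
        rw [hφ_eval] at hφx
        have hx1 : (0:ℝ) ≤ x ^ (k - 1) := Real.rpow_nonneg hx0.le _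
        calc k * x ^ (k - 1) * f x + x ^ k * deriv f x
            = x ^ (k - 1) * (x * deriv f x + k * f x) := by rw [hxk]; ring
          _ ≤ 0 := mul_nonpos_of_nonneg_of_nonpos hx1 hφx
    -- conclude the tail estimate
    have hs₂s₁ : s₂ ≤ s₁ := hs₂mem.2
    have h1 : s ^ k * f s ≤ s₂ ^ k * f s₂ :=
      hmonot (Set.mem_Ici.mpr le_rfl) (Set.mem_Ici.mpr (hs₂s₁.trans hs)) (hs₂s₁.trans hs)
    have h2 : s₂ ^ k * f s₂ ≤ s₁ ^ k * ε :=
      mul_le_mul (Real.rpow_le_rpow hs₂pos.le hs₂s₁ hk0.le)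
        (hfsmall s₂ hs₂mem.1) (hfpos s₂).le (Real.rpow_nonneg hs₁pos.le _)
    have hspos : 0 < s := hs₁pos.trans_le hs
    have hsk : 0 < s ^ k := Real.rpow_pos_of_pos hspos k
    have h3 : s ^ k * f s ≤ s₁ ^ k * ε := h1.trans h2
    rw [Real.rpow_neg hspos.le]
    rw [show ε * s₁ ^ k * (s ^ k)⁻¹ = (s₁ ^ k * ε) / s ^ k by ring, le_div_iff₀ hsk]
    calc f s * s ^ k = s ^ k * f s := by ring
      _ ≤ s₁ ^ k * ε := h3
  -- the dominating function
  set bound : ℝ → ℝ := fun s => (A₀ + 1 + ε) * s₁ ^ k * max |s| s₁ ^ (-k) with hbound_def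
  have hbound_eval : ∀ s : ℝ, |s| ≤ s₁ → bound s = A₀ + 1 + ε := by
    intro s hsle
    rw [hbound_def]
    simp only [max_eq_right hsle]
    rw [mul_assoc, ← Real.rpow_add hs₁pos]
    norm_num
  have hdom : ∀ A ∈ Set.Icc (A₀ / 2) (A₀ + 1), ∀ s : ℝ, ‖q s A‖ ≤ bound s := by
    intro A hAK s
    have hA : 0 < A := hKpos A hAK
    rw [Real.norm_eq_abs, abs_of_pos (hpos A hA s), habs A hA s]
    rcases le_or_gt |s| s₁ with h | h
    · rw [hbound_eval s h]
      have h1 := hle0 A hA |s| (abs_nonneg s)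
      have h2 := hAK.2
      linarith
    · rw [hbound_def]
      simp only [max_eq_left h.le]
      calc q |s| A ≤ ε * s₁ ^ k * |s| ^ (-k) := htail A hAK |s| h.le
        _ ≤ (A₀ + 1 + ε) * s₁ ^ k * |s| ^ (-k) :=
            mul_le_mul_of_nonneg_right
              (mul_le_mul_of_nonneg_right (by linarith) (Real.rpow_nonneg hs₁pos.le _))
              (Real.rpow_nonneg (abs_nonneg s) _)
  -- integrability of the dominating function
  have hcont_h : Continuous (fun s : ℝ => max |s| s₁ ^ (-k)) := by
    apply Continuous.rpow_const (continuous_abs.max continuous_const)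
    intro x
    exact Or.inl (ne_of_gt (lt_of_lt_of_le hs₁pos (le_max_right _ _)))
  have hIoi : IntegrableOn (fun s : ℝ => max |s| s₁ ^ (-k)) (Set.Ioi s₁) := by
    apply (integrableOn_Ioi_rpow_of_lt (show -k < -1 by linarith) hs₁pos).congr_fun
      ?_ measurableSet_Ioi
    intro x hx
    have hx0 : 0 < x := hs₁pos.trans hx
    show x ^ (-k) = max |x| s₁ ^ (-k)
    rw [abs_of_pos hx0, max_eq_left (le_of_lt hx)]
  have hIio : IntegrableOn (fun s : ℝ => max |s| s₁ ^ (-k)) (Set.Iio (-s₁)) := by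
    have hind : Integrable (Set.indicator (Set.Ioi s₁) (fun s : ℝ => max |s| s₁ ^ (-k))) :=
      (integrable_indicator_iff measurableSet_Ioi).mpr hIoi
    have hneg := hind.comp_neg
    have heq : (fun x : ℝ => Set.indicator (Set.Ioi s₁)
        (fun s : ℝ => max |s| s₁ ^ (-k)) (-x))
        = Set.indicator (Set.Iio (-s₁)) (fun s : ℝ => max |s| s₁ ^ (-k)) := by
      funext x
      by_cases hx : x < -s₁
      · rw [Set.indicator_of_mem (Set.mem_Ioi.mpr (by linarith)),
          Set.indicator_of_mem (Set.mem_Iio.mpr hx), abs_neg]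
      · push_neg at hx
        have h1 : -x ∉ Set.Ioi s₁ := by simp only [Set.mem_Ioi, not_lt]; linarith
        have h2 : x ∉ Set.Iio (-s₁) := by simp only [Set.mem_Iio, not_lt]; linarith
        rw [Set.indicator_of_notMem h1, Set.indicator_of_notMem h2]
    rw [heq] at hneg
    exact (integrable_indicator_iff measurableSet_Iio).mp hneg
  have hIcc : IntegrableOn (fun s : ℝ => max |s| s₁ ^ (-k)) (Set.Icc (-s₁) s₁) :=
    hcont_h.continuousOn.integrableOn_Icc
  have hint_h : Integrable (fun s : ℝ => max |s| s₁ ^ (-k)) := by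
    have h1 : IntegrableOn (fun s : ℝ => max |s| s₁ ^ (-k)) (Set.Iic s₁) := by
      rw [← Set.Iio_union_Icc_eq_Iic (by linarith : -s₁ ≤ s₁)]
      exact hIio.union hIcc
    have h2 := h1.union hIoi
    rwa [Set.Iic_union_Ioi, integrableOn_univ] at h2
  have hbound_int : Integrable bound := by
    have := hint_h.const_mul ((A₀ + 1 + ε) * s₁ ^ k)
    simpa [hbound_def, mul_assoc] using this
  -- dominated convergence
  apply continuousWithinAt_of_dominated (bound := bound)
  · filter_upwards [self_mem_nhdsWithin] with A hA
    exact ((hq A hA).continuous).aestronglyMeasurable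
  · filter_upwards [nhdsWithin_le_nhds (Icc_mem_nhds (show A₀ / 2 < A₀ by linarith)
      (show A₀ < A₀ + 1 by linarith))] with A hA
    exact ae_of_all _ (hdom A hA)
  · exact hbound_int
  · exact ae_of_all _ (fun s => (hcont s) A₀ hA₀)
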